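/- In U_h(sl₂), for all natural numbers a, b the normal-ordering formula (z^a/a!)(x^b/b!) = ∑_{v=0}^{min(a,b)} (-1)^v · (x^{b-v}/(b-v)!) · (y + (a+b-(v+1))h)_{v,-h} · (z^{a-v}/(a-v)!) · (h^v/v!) holds, where (u)_{v,-h} = u(u-h)(u-2h)···(u-(v-1)h). -/

import Mathlib

namespace UhSl2

/-- Generators of `U_h(sl₂)`. -/
inductive Gen : Type | x | y | z | h

variable (K : Type*) [Field K]

open FreeAlgebra in
/-- Defining relations of `U_h(sl₂)`: `h` is central, `yx = xy + 2xh`,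
`zx = xz - yh`, `zy = yz + 2zh`. -/
inductive Rel : FreeAlgebra K Gen → FreeAlgebra K Gen → Prop
  | yx : Rel (ι K Gen.y * ι K Gen.x) (ι K Gen.x * ι K Gen.y + 2 * (ι K Gen.x * ι K Gen.h))
  | zx : Rel (ι K Gen.z * ι K Gen.x) (ι K Gen.x * ι K Gen.z - ι K Gen.y * ι K Gen.h)
  | zy : Rel (ι K Gen.z * ι K Gen.y) (ι K Gen.y * ι K Gen.z + 2 * (ι K Gen.z * ι K Gen.h))
  | hx : Rel (ι K Gen.h * ι K Gen.x) (ι K Gen.x * ι K Gen.h)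
  | hy : Rel (ι K Gen.h * ι K Gen.y) (ι K Gen.y * ι K Gen.h)
  | hz : Rel (ι K Gen.h * ι K Gen.z) (ι K Gen.z * ι K Gen.h)

/-- The homogeneous universal enveloping algebra `U_h(sl₂)`. -/
abbrev Uh := RingQuot (Rel K)

noncomputable def X : Uh K := RingQuot.mkAlgHom K (Rel K) (FreeAlgebra.ι K Gen.x)
noncomputable def Y : Uh K := RingQuot.mkAlgHom K (Rel K) (FreeAlgebra.ι K Gen.y)
noncomputable def Z : Uh K := RingQuot.mkAlgHom K (Rel K) (FreeAlgebra.ι K Gen.z)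
noncomputable def H : Uh K := RingQuot.mkAlgHom K (Rel K) (FreeAlgebra.ι K Gen.h)

/-- Divided power `u^n / n!`. -/
noncomputable def dp (n : ℕ) (u : Uh K) : Uh K := (n.factorial : K)⁻¹ • u ^ n

end UhSl2

open UhSl2

namespace UhSl2

variable (K : Type*) [Field K]

lemma hx_rel : H K * X K = X K * H K := by
  have h := RingQuot.mkAlgHom_rel K (Rel.hx (K := K))
  simpa only [map_mul, H, X] using h

lemma hy_rel : H K * Y K = Y K * H K := by
  simpa only [map_mul, H, Y] using RingQuot.mkAlgHom_rel K (Rel.hy (K := K))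

lemma hz_rel : H K * Z K = Z K * H K := by
  simpa only [map_mul, H, Z] using RingQuot.mkAlgHom_rel K (Rel.hz (K := K))

lemma yx_rel : Y K * X K = X K * Y K + 2 * (X K * H K) := by
  simpa only [map_mul, map_add, map_ofNat, X, Y, H] using RingQuot.mkAlgHom_rel K (Rel.yx (K := K))

lemma zx_rel : Z K * X K = X K * Z K - Y K * H K := by
  simpa only [map_mul, map_sub, X, Y, Z, H] using RingQuot.mkAlgHom_rel K (Rel.zx (K := K))

lemma zy_rel : Z K * Y K = Y K * Z K + 2 * (Z K * H K) := by
  simpa only [map_mul, map_add, map_ofNat, Y, Z, H] using RingQuot.mkAlgHom_rel K (Rel.zy (K := K))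

end UhSl2
namespace UhSl2

variable (K : Type*) [Field K]

/-- Pochhammer-type product `(Y + s H)(Y + (s-1) H) ⋯ (Y + (s-v+1) H)`. -/
noncomputable def P (s : K) (v : ℕ) : Uh K :=
  ((List.range v).map (fun i : ℕ => Y K + (s - (i : K)) • H K)).prod

variable {K}

lemma two_mul_eq_smul (u : Uh K) : 2 * u = (2 : K) • u := by
  rw [two_mul, two_smul]

lemma P_zero (s : K) : P K s 0 = 1 := rfl

lemma P_succ_back (s : K) (v : ℕ) :
    P K s (v + 1) = P K s v * (Y K + (s - (v : K)) • H K) := by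
  simp [P, List.range_succ]

lemma P_succ_front (s : K) (v : ℕ) :
    P K s (v + 1) = (Y K + s • H K) * P K (s - 1) v := by
  rw [P, List.range_succ_eq_map]
  simp only [List.map_cons, List.prod_cons, List.map_map, Nat.cast_zero, sub_zero]
  have : ((fun i : ℕ => Y K + (s - (i : K)) • H K) ∘ Nat.succ)
      = (fun i : ℕ => Y K + (s - 1 - (i : K)) • H K) := by
    funext i
    simp only [Function.comp_apply, Nat.succ_eq_add_one]
    push_cast
    ring_nf
  rw [this, P]

lemma lin_mul_lin (α β : K) :
    (Y K + α • H K) * (Y K + β • H K) = (Y K + β • H K) * (Y K + α • H K) := by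
  simp only [mul_add, add_mul, smul_mul_assoc, mul_smul_comm, hy_rel]
  module

lemma lin_mul_P (α : K) (s : K) (v : ℕ) :
    (Y K + α • H K) * P K s v = P K s v * (Y K + α • H K) := by
  induction v with
  | zero => simp [P_zero]
  | succ n ih =>
      rw [P_succ_back, ← mul_assoc, ih, mul_assoc, lin_mul_lin, mul_assoc]

lemma lin_mul_X (α : K) :
    (Y K + α • H K) * X K = X K * (Y K + (α + 2) • H K) := by
  rw [add_mul, smul_mul_assoc, hx_rel, yx_rel, two_mul_eq_smul, mul_add,
    mul_smul_comm]
  module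

lemma P_mul_X (s : K) (v : ℕ) :
    P K s v * X K = X K * P K (s + 2) v := by
  induction v with
  | zero => simp [P_zero]
  | succ n ih =>
      rw [P_succ_back, mul_assoc, lin_mul_X, ← mul_assoc, ih, mul_assoc,
        P_succ_back]
      congr 3
      ring

lemma z_mul_lin (β : K) :
    Z K * (Y K + β • H K) = (Y K + (β + 2) • H K) * Z K := by
  rw [mul_add, mul_smul_comm, zy_rel, two_mul_eq_smul, add_mul,
    smul_mul_assoc, hz_rel]
  module

end UhSl2
namespace UhSl2

variable {K : Type*} [Field K]

lemma h_zpow (n : ℕ) : H K * Z K ^ n = Z K ^ n * H K :=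
  Commute.pow_right (hz_rel K) n

lemma hpow_x (v : ℕ) : H K ^ v * X K = X K * H K ^ v :=
  (Commute.pow_left (hx_rel K) v)

lemma zpow_succ_x (n : ℕ) :
    Z K ^ (n + 1) * X K =
      X K * Z K ^ (n + 1)
        - ((n : K) + 1) • ((Y K + (n : K) • H K) * (Z K ^ n * H K)) := by
  induction n with
  | zero =>
      simp only [pow_one, pow_zero, one_mul, Nat.cast_zero, zero_add, zero_smul,
        add_zero, one_smul]
      exact zx_rel K
  | succ n ih =>
      have e1 : Z K ^ (n + 2) * X K = Z K * (Z K ^ (n + 1) * X K) := by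
        rw [← mul_assoc, ← pow_succ']
      rw [e1, ih, mul_sub, mul_smul_comm, ← mul_assoc, zx_rel, ← mul_assoc,
        z_mul_lin]
      -- now : (X*Z - Y*H) * Z^(n+1) - (n+1) • ((Y + (n+2)•H) * Z * (Z^n * H))
      rw [sub_mul, mul_assoc (X K), ← pow_succ']
      have e2 : (Y K + ((n : K) + 2) • H K) * Z K * (Z K ^ n * H K)
          = (Y K + ((n : K) + 2) • H K) * (Z K ^ (n + 1) * H K) := by
        rw [mul_assoc, ← mul_assoc (Z K), ← pow_succ']
      rw [e2]
      have e3 : Y K * H K * Z K ^ (n + 1) = Y K * (Z K ^ (n + 1) * H K) := by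
        rw [mul_assoc, h_zpow]
      rw [e3]
      have e4 : ((n : K) + 1) • ((Y K + ((n : K) + 2) • H K) * (Z K ^ (n + 1) * H K))
          = ((n : K) + 1) • (Y K * (Z K ^ (n + 1) * H K))
            + (((n : K) + 1) * ((n : K) + 2)) • (H K * (Z K ^ (n + 1) * H K)) := by
        simp only [add_mul, smul_add, smul_mul_assoc, smul_smul]
        try module
      have e5 : ((n : K) + 1 + 1) • ((Y K + ((n : K) + 1) • H K) * (Z K ^ (n + 1) * H K))
          = ((n : K) + 2) • (Y K * (Z K ^ (n + 1) * H K))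
            + (((n : K) + 1) * ((n : K) + 2)) • (H K * (Z K ^ (n + 1) * H K)) := by
        simp only [add_mul, smul_add, smul_mul_assoc, smul_smul]
        module
      push_cast
      rw [e4, e5]
      module

lemma zpow_x (n : ℕ) :
    Z K ^ n * X K =
      X K * Z K ^ n
        - (n : K) • ((Y K + ((n : K) - 1) • H K) * (Z K ^ (n - 1) * H K)) := by
  cases n with
  | zero => simp
  | succ n =>
      rw [zpow_succ_x]
      push_cast
      simp only [Nat.add_sub_cancel, add_sub_cancel_right]

end UhSl2
namespace UhSl2

variable (K : Type*) [Field K] [CharZero K]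

/-- coefficient `(-1)^v C(a,v) C(b,v) v!` -/
noncomputable def coef (a b v : ℕ) : K :=
  (-1 : K) ^ v * (a.choose v : K) * (b.choose v : K) * (v.factorial : K)

variable {K}

lemma coef_zero (a b : ℕ) : coef K a b 0 = 1 := by simp [coef]

lemma coef_top (a b : ℕ) (h : b < v) : coef K a b v = 0 := by
  simp [coef, Nat.choose_eq_zero_of_lt h]

lemma S1 (a b v : ℕ) :
    coef K a b (v + 1) - coef K a b v * ((a - v : ℕ) : K)
      = coef K a (b + 1) (v + 1) := by
  have h1 : (a.choose (v+1) : K) * ((v : K) + 1)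
      = (a.choose v : K) * ((a - v : ℕ) : K) := by
    exact_mod_cast congrArg (Nat.cast (R := K)) (Nat.choose_succ_right_eq a v)
  have h2 : ((b+1).choose (v+1) : K) = (b.choose v : K) + (b.choose (v+1) : K) := by
    exact_mod_cast congrArg (Nat.cast (R := K)) (Nat.choose_succ_succ b v)
  have h3 : ((v+1).factorial : K) = ((v : K) + 1) * (v.factorial : K) := by
    exact_mod_cast congrArg (Nat.cast (R := K)) (Nat.factorial_succ v)
  simp only [coef]
  rw [h2, h3]
  linear_combination ((-1 : K) ^ v * (b.choose v : K) * (v.factorial : K)) * h1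

lemma S2 (a b v : ℕ) (hv : v ≤ b) :
    coef K a b (v + 1) * (((a : K) + (b : K) - (v : K) - 1) + 1)
      - coef K a b v * ((a - v : ℕ) : K) * (((a - v : ℕ) : K) - 1)
      = coef K a (b + 1) (v + 1) * (((a : K) + (b : K) - (v : K) - 1) - (v : K)) := by
  by_cases hva : v ≤ a
  · have h1 : (a.choose (v+1) : K) * ((v : K) + 1)
        = (a.choose v : K) * ((a : K) - (v : K)) := by
      rw [← Nat.cast_sub hva]
      exact_mod_cast congrArg (Nat.cast (R := K)) (Nat.choose_succ_right_eq a v)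
    have h4 : (b.choose (v+1) : K) * ((v : K) + 1)
        = (b.choose v : K) * ((b : K) - (v : K)) := by
      rw [← Nat.cast_sub hv]
      exact_mod_cast congrArg (Nat.cast (R := K)) (Nat.choose_succ_right_eq b v)
    have h2 : ((b+1).choose (v+1) : K) = (b.choose v : K) + (b.choose (v+1) : K) := by
      exact_mod_cast congrArg (Nat.cast (R := K)) (Nat.choose_succ_succ b v)
    have h3 : ((v+1).factorial : K) = ((v : K) + 1) * (v.factorial : K) := by
      exact_mod_cast congrArg (Nat.cast (R := K)) (Nat.factorial_succ v)
    have ht : ((a - v : ℕ) : K) = (a : K) - (v : K) := by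
      rw [Nat.cast_sub hva]
    simp only [coef]
    rw [h2, h3, ht]
    linear_combination
      ((-1 : K) ^ v * (v.factorial : K) * (b.choose v : K) * ((a : K) - (v : K) - 1)) * h1
      - ((-1 : K) ^ v * (v.factorial : K) * (a.choose (v+1) : K) * ((v : K) + 1)) * h4
  · have h5 : a.choose (v + 1) = 0 := Nat.choose_eq_zero_of_lt (by omega)
    have h6 : a - v = 0 := by omega
    simp [coef, h5, h6]

end UhSl2
namespace UhSl2

set_option linter.unusedSectionVars false

variable {K : Type*} [Field K] [CharZero K]

lemma key (a b v : ℕ) (hv : v ≤ b) :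
    coef K a b (v + 1) • P K ((a : K) + (b : K) - (v : K) - 1 + 1) (v + 1)
      - (coef K a b v * ((a - v : ℕ) : K)) •
          (P K ((a : K) + (b : K) - (v : K) - 1) v *
            (Y K + (((a - v : ℕ) : K) - 1) • H K))
      = coef K a (b + 1) (v + 1) • P K ((a : K) + (b : K) - (v : K) - 1) (v + 1) := by
  set σ : K := (a : K) + (b : K) - (v : K) - 1 with hσ
  have e1 : P K (σ + 1) (v + 1) = P K σ v * (Y K + (σ + 1) • H K) := by
    rw [P_succ_front, add_sub_cancel_right, lin_mul_P]
  rw [e1, P_succ_back]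
  rw [← mul_smul_comm, ← mul_smul_comm, ← mul_smul_comm, ← mul_sub]
  congr 1
  have s1 := S1 (K := K) a b v
  have s2 := S2 (K := K) a b v hv
  match_scalars
  · linear_combination s1
  · linear_combination s2

end UhSl2
namespace UhSl2

set_option linter.unusedSectionVars false

variable {K : Type*} [Field K] [CharZero K]

lemma x_pow_mul (n : ℕ) (c : Uh K) : X K ^ n * (X K * c) = X K ^ (n + 1) * c := by
  rw [← mul_assoc, ← pow_succ]

lemma P_mul_X' (s : K) (v : ℕ) (c : Uh K) :
    P K s v * (X K * c) = X K * (P K (s + 2) v * c) := by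
  rw [← mul_assoc, P_mul_X, mul_assoc]

lemma step_term (a b v : ℕ) (hv : v ≤ b) (s : K) :
    X K ^ (b - v) * P K s v * Z K ^ (a - v) * H K ^ v * X K
      = X K ^ (b + 1 - v) * P K (s + 2) v * Z K ^ (a - v) * H K ^ v
        - ((a - v : ℕ) : K) •
            (X K ^ (b - v) * (P K s v * (Y K + (((a - v : ℕ) : K) - 1) • H K))
              * Z K ^ (a - v - 1) * H K ^ (v + 1)) := by
  have hb : b + 1 - v = (b - v) + 1 := by omega
  rw [hb]
  simp only [mul_assoc, hpow_x]
  rw [← mul_assoc (Z K ^ (a - v)) (X K), zpow_x]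
  simp only [sub_mul, smul_mul_assoc, mul_sub, mul_smul_comm, mul_assoc, ← pow_succ']
  rw [P_mul_X', x_pow_mul]

lemma smul_sandwich {c1 c2 c3 : K} {p1 p2 p3 m n1 n2 : Uh K}
    (h : c1 • p1 - c2 • p2 = c3 • p3) :
    c1 • (m * p1 * n1 * n2) - c2 • (m * p2 * n1 * n2) = c3 • (m * p3 * n1 * n2) := by
  have h2 := congrArg (fun u : Uh K => m * u * n1 * n2) h
  simpa only [mul_sub, sub_mul, mul_smul_comm, smul_mul_assoc] using h2

end UhSl2
namespace UhSl2

set_option linter.unusedSectionVars false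
set_option maxHeartbeats 1000000

variable {K : Type*} [Field K] [CharZero K]

theorem aux (a b : ℕ) :
    Z K ^ a * X K ^ b
      = ∑ v ∈ Finset.range (b + 1),
          coef K a b v •
            (X K ^ (b - v) * P K ((a : K) + (b : K) - (v : K) - 1) v
              * Z K ^ (a - v) * H K ^ v) := by
  induction b with
  | zero =>
      simp [coef_zero, P_zero]
  | succ b ih =>
      have lhs1 : Z K ^ a * X K ^ (b + 1) = Z K ^ a * X K ^ b * X K := by
        rw [mul_assoc, ← pow_succ]
      rw [lhs1, ih, Finset.sum_mul]
      push_cast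
      -- abbreviations
      set A : ℕ → Uh K := fun v =>
        coef K a b v • (X K ^ (b + 1 - v) * P K ((a : K) + (b : K) - (v : K) - 1 + 2) v
          * Z K ^ (a - v) * H K ^ v) with hA
      set B : ℕ → Uh K := fun v =>
        (coef K a b v * ((a - v : ℕ) : K)) •
          (X K ^ (b - v) *
              (P K ((a : K) + (b : K) - (v : K) - 1) v
                * (Y K + (((a - v : ℕ) : K) - 1) • H K))
            * Z K ^ (a - v - 1) * H K ^ (v + 1)) with hB
      set T : ℕ → Uh K := fun v =>
        coef K a (b + 1) v •
          (X K ^ (b + 1 - v) * P K ((a : K) + ((b : K) + 1) - (v : K) - 1) v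
            * Z K ^ (a - v) * H K ^ v) with hT
      have hstep : ∀ v ∈ Finset.range (b + 1),
          (coef K a b v • (X K ^ (b - v) * P K ((a : K) + (b : K) - (v : K) - 1) v
              * Z K ^ (a - v) * H K ^ v)) * X K = A v - B v := by
        intro v hv
        have hv' : v ≤ b := by
          simpa [Nat.lt_succ_iff] using Finset.mem_range.mp hv
        rw [smul_mul_assoc, step_term a b v hv', smul_sub, hA, hB]
        simp only [smul_smul]
      rw [Finset.sum_congr rfl hstep, Finset.sum_sub_distrib]
      have hA1 : A (b + 1) = 0 := by
        simp [hA, coef_top a b (Nat.lt_succ_self b)]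
      have hAext : ∑ v ∈ Finset.range (b + 1 + 1), A v = ∑ v ∈ Finset.range (b + 1), A v := by
        rw [Finset.sum_range_succ, hA1, add_zero]
      rw [← hAext, Finset.sum_range_succ' A (b + 1), Finset.sum_range_succ' T (b + 1)]
      have hA0T0 : A 0 = T 0 := by
        simp [hA, hT, coef_zero, P_zero]
      have hterm : ∀ v ∈ Finset.range (b + 1), A (v + 1) - B v = T (v + 1) := by
        intro v hv
        have hv' : v ≤ b := by
          simpa [Nat.lt_succ_iff] using Finset.mem_range.mp hv
        have eN1 : b + 1 - (v + 1) = b - v := by omega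
        have eN2 : a - (v + 1) = a - v - 1 := by omega
        have eK1 : (a : K) + (b : K) - (((v : ℕ) + 1 : ℕ) : K) - 1 + 2
            = ((a : K) + (b : K) - (v : K) - 1) + 1 := by push_cast; ring
        have eK2 : (a : K) + ((b : K) + 1) - (((v : ℕ) + 1 : ℕ) : K) - 1
            = (a : K) + (b : K) - (v : K) - 1 := by push_cast; ring
        rw [hA, hB, hT]
        simp only []
        rw [eN1, eN2, eK1, eK2]
        exact smul_sandwich (key a b v hv')
      rw [hA0T0, add_sub_right_comm, ← Finset.sum_sub_distrib,
        Finset.sum_congr rfl hterm]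

end UhSl2

set_option linter.unusedSectionVars false
set_option maxHeartbeats 1000000

/-- In `U_h(sl₂)`:
`(z^a/a!)(x^b/b!) = ∑_{v=0}^{min(a,b)} (-1)^v (x^{b-v}/(b-v)!) (y+(a+b-(v+1))h)_{v,-h} (z^{a-v}/(a-v)!)(h^v/v!)`,
where `(u)_{v,-h} = u(u-h)···(u-(v-1)h)` (here the `i`-th factor is
`y + (a+b-(v+1)-i)h`). -/

theorem zx_normal_order_pochhammer (K : Type*) [Field K] [CharZero K] (a b : ℕ) :
    dp K a (Z K) * dp K b (X K) =
      ∑ v ∈ Finset.range (min a b + 1),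
        ((-1 : K) ^ v) •
          (dp K (b - v) (X K) *
            ((List.range v).map
              (fun i : ℕ => Y K + (((a : K) + (b : K) - ((v : K) + 1)) - (i : K)) • H K)).prod *
            dp K (a - v) (Z K) * dp K v (H K)) := by
  have hsub : Finset.range (min a b + 1) ⊆ Finset.range (b + 1) :=
    Finset.range_subset_range.mpr (by omega)
  have hL : dp K a (Z K) * dp K b (X K)
      = ∑ v ∈ Finset.range (b + 1),
          ((a.factorial : K)⁻¹ * (b.factorial : K)⁻¹ * coef K a b v) •
            (X K ^ (b - v) * P K ((a : K) + (b : K) - (v : K) - 1) v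
              * Z K ^ (a - v) * H K ^ v) := by
    simp only [dp, smul_mul_assoc, mul_smul_comm, smul_smul]
    rw [aux, Finset.smul_sum]
    simp only [smul_smul]
    refine Finset.sum_congr rfl fun v _ => ?_
    congr 1
    ring
  have hz : ∀ v ∈ Finset.range (b + 1), v ∉ Finset.range (min a b + 1) →
      ((a.factorial : K)⁻¹ * (b.factorial : K)⁻¹ * coef K a b v) •
        (X K ^ (b - v) * P K ((a : K) + (b : K) - (v : K) - 1) v
          * Z K ^ (a - v) * H K ^ v) = 0 := by
    intro v hv hnv
    have hav : a < v := by
      simp only [Finset.mem_range] at hv hnv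
      omega
    simp [coef, Nat.choose_eq_zero_of_lt hav]
  rw [hL, ← Finset.sum_subset hsub hz]
  refine Finset.sum_congr rfl ?_
  intro v hv
  have hva : v ≤ a := by
    simp only [Finset.mem_range] at hv; omega
  have hvb : v ≤ b := by
    simp only [Finset.mem_range] at hv; omega
  have hPdef : ((List.range v).map
      (fun i : ℕ => Y K + (((a : K) + (b : K) - ((v : K) + 1)) - (i : K)) • H K)).prod
      = P K ((a : K) + (b : K) - ((v : K) + 1)) v := rfl
  have hs : (a : K) + (b : K) - ((v : K) + 1) = (a : K) + (b : K) - (v : K) - 1 := by ring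
  rw [hPdef, hs]
  simp only [dp, smul_mul_assoc, mul_smul_comm, smul_smul]
  congr 1
  -- scalar identity
  have ha : ((a.choose v : K)) * (v.factorial : K) * ((a - v).factorial : K)
      = (a.factorial : K) := by
    exact_mod_cast congrArg (Nat.cast (R := K)) (Nat.choose_mul_factorial_mul_factorial hva)
  have hb : ((b.choose v : K)) * (v.factorial : K) * ((b - v).factorial : K)
      = (b.factorial : K) := by
    exact_mod_cast congrArg (Nat.cast (R := K)) (Nat.choose_mul_factorial_mul_factorial hvb)
  have n1 : (a.factorial : K) ≠ 0 := Nat.cast_ne_zero.mpr (Nat.factorial_ne_zero a)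
  have n2 : (b.factorial : K) ≠ 0 := Nat.cast_ne_zero.mpr (Nat.factorial_ne_zero b)
  have n3 : ((a - v).factorial : K) ≠ 0 := Nat.cast_ne_zero.mpr (Nat.factorial_ne_zero _)
  have n4 : ((b - v).factorial : K) ≠ 0 := Nat.cast_ne_zero.mpr (Nat.factorial_ne_zero _)
  have n5 : ((v).factorial : K) ≠ 0 := Nat.cast_ne_zero.mpr (Nat.factorial_ne_zero v)
  rw [coef]
  field_simp
  linear_combination (((b.choose v : K) * (v.factorial : K)
    * ((b - v).factorial : K)) * ha + (a.factorial : K) * hb)
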